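/- arXiv:1709.06034 — 4 statements merged into one kernel-verified Lean document; each statement's English description precedes it below -/
import Mathlib

section
/- Let A be a unital C*-algebra over ℂ and let Q ∈ A be quasinilpotent. Then ‖ |(1+Q)^n|^{1/n} − 1 ‖ → 0 as n → ∞; in particular, 1 + Q has the norm convergence property. -/
open Filter Topology NNReal ENNReal

/-- The element `|T^n|^{1/n} = ((T^n)^* T^n)^{1/(2n)}`, defined via the continuous
functional calculus. -/
noncomputable def absPowRoot {A : Type*} [CStarAlgebra A] [PartialOrder A] [StarOrderedRing A]
    (T : A) (n : ℕ) : A :=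
  CFC.rpow (star (T ^ n) * T ^ n) ((2 * n : ℝ))⁻¹

lemma key_bound {A : Type*} [CStarAlgebra A] [PartialOrder A] [StarOrderedRing A]
    (u : Aˣ) {n : ℕ} (hn : 1 ≤ n) :
    ‖absPowRoot (↑u : A) n - 1‖ ≤
      |‖((u : A)) ^ n‖ ^ (1 / n : ℝ) - 1| + |(‖((↑u⁻¹ : A)) ^ n‖ ^ (1 / n : ℝ))⁻¹ - 1| := by
  rcases subsingleton_or_nontrivial A with hA | hA
  · rw [Subsingleton.elim (absPowRoot (↑u : A) n - 1) 0, norm_zero]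
    positivity
  set r : ℝ := ((2 * n : ℝ))⁻¹ with hr
  have hn' : (n : ℝ) ≠ 0 := by exact_mod_cast Nat.one_le_iff_ne_zero.mp hn
  have hr0 : 0 ≤ r := by positivity
  have h2r : (2 : ℝ) * r = 1 / n := by rw [hr]; field_simp
  set un : Aˣ := u ^ n with hun
  set w : Aˣ := star un * un with hw
  have hwa : (w : A) = star ((u : A) ^ n) * (u : A) ^ n := by
    simp [hw, hun]
  have hpos : (0 : A) ≤ (w : A) := hwa ▸ star_mul_self_nonneg _
  have hsa : IsSelfAdjoint (w : A) := .of_nonneg hpos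
  set M : ℝ := ‖(u : A) ^ n‖ with hM
  set m : ℝ := ‖((↑u⁻¹ : A)) ^ n‖ with hm
  have hMpos : 0 < M := norm_pos_iff.mpr (by
    rw [← Units.val_pow_eq_pow_val]; exact (u ^ n).isUnit.ne_zero)
  have hmpos : 0 < m := norm_pos_iff.mpr (by
    rw [← Units.val_pow_eq_pow_val]; exact (u⁻¹ ^ n).isUnit.ne_zero)
  set S : ℝ := M ^ (1 / n : ℝ) with hS
  set Tt : ℝ := m ^ (1 / n : ℝ) with hTt
  have hSpos : 0 < S := Real.rpow_pos_of_pos hMpos _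
  have hTtpos : 0 < Tt := Real.rpow_pos_of_pos hmpos _
  -- norm bounds
  have hwnorm : ‖(w : A)‖ ≤ M ^ 2 := by
    rw [hwa, sq]
    calc ‖star ((u : A) ^ n) * (u : A) ^ n‖ ≤ ‖star ((u : A) ^ n)‖ * ‖(u : A) ^ n‖ :=
          norm_mul_le _ _
      _ = M * M := by rw [norm_star]
  have hwinv : ((w⁻¹ : Aˣ) : A) = ((↑u⁻¹ : A)) ^ n * star (((↑u⁻¹ : A)) ^ n) := by
    rw [hw, mul_inv_rev, ← star_inv]
    push_cast [hun, ← inv_pow]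
    rfl
  have hwinvnorm : ‖((w⁻¹ : Aˣ) : A)‖ ≤ m ^ 2 := by
    rw [hwinv, sq]
    calc ‖((↑u⁻¹ : A)) ^ n * star (((↑u⁻¹ : A)) ^ n)‖
        ≤ ‖((↑u⁻¹ : A)) ^ n‖ * ‖star (((↑u⁻¹ : A)) ^ n)‖ := norm_mul_le _ _
      _ = m * m := by rw [norm_star]
  -- rewrite absPowRoot as a real cfc
  have habs : absPowRoot (↑u : A) n - 1
      = cfc (fun x : ℝ => (((x.toNNReal ^ r : ℝ≥0) : ℝ) - 1)) (w : A) := by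
    have h1 : absPowRoot (↑u : A) n = cfc (fun x : ℝ≥0 => x ^ r) (w : A) := by
      rw [absPowRoot, ← hwa]; rfl
    have hfc : Continuous fun x : ℝ => ((x.toNNReal ^ r : ℝ≥0) : ℝ) :=
      continuous_coe.comp ((NNReal.continuous_rpow_const hr0).comp continuous_real_toNNReal)
    rw [h1, cfc_nnreal_eq_real _ _ hpos, cfc_sub _ _ (w : A) hfc.continuousOn
      continuousOn_const, cfc_const_one ℝ (w : A)]
  rw [habs]
  apply norm_cfc_le (by positivity)
  intro x hx
  have hx0 : 0 ≤ x := spectrum_nonneg_of_nonneg hpos hx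
  have hxne : x ≠ 0 := by
    rintro rfl
    exact (spectrum.zero_notMem_iff ℝ).mpr w.isUnit hx
  have hxpos : 0 < x := lt_of_le_of_ne hx0 (Ne.symm hxne)
  have hxM : x ≤ M ^ 2 := by
    have := spectrum.norm_le_norm_of_mem hx
    rw [Real.norm_eq_abs, abs_of_nonneg hx0] at this
    exact this.trans hwnorm
  have hxm : (m ^ 2)⁻¹ ≤ x := by
    have hmem : x⁻¹ ∈ spectrum ℝ ((w⁻¹ : Aˣ) : A) := by
      have := (spectrum.inv_mem_iff (r := Units.mk0 x hxne) (a := w)).mp hx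
      simpa using this
    have h1 : x⁻¹ ≤ m ^ 2 := by
      have := spectrum.norm_le_norm_of_mem hmem
      rw [Real.norm_eq_abs, abs_of_nonneg (by positivity)] at this
      exact this.trans hwinvnorm
    calc (m ^ 2)⁻¹ ≤ (x⁻¹)⁻¹ := by
          exact inv_anti₀ (by positivity) h1
      _ = x := inv_inv x
  -- rpow bounds
  have hup : x ^ r ≤ S := by
    calc x ^ r ≤ (M ^ 2) ^ r := Real.rpow_le_rpow hx0 hxM hr0
      _ = S := by
        rw [hS, ← Real.rpow_natCast M 2, ← Real.rpow_mul hMpos.le]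
        norm_num [h2r]
  have hlo : Tt⁻¹ ≤ x ^ r := by
    calc Tt⁻¹ = ((m ^ 2) ^ r)⁻¹ := by
          rw [hTt, ← Real.rpow_natCast m 2, ← Real.rpow_mul hmpos.le]
          norm_num [h2r]
      _ = ((m ^ 2)⁻¹) ^ r := (Real.inv_rpow (by positivity) r).symm
      _ ≤ x ^ r := Real.rpow_le_rpow (by positivity) hxm hr0
  have hfx : (((x.toNNReal ^ r : ℝ≥0) : ℝ)) = x ^ r := by
    rw [NNReal.coe_rpow, Real.coe_toNNReal x hx0]
  rw [Real.norm_eq_abs, hfx, abs_sub_le_iff]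
  constructor
  · have := le_abs_self (S - 1)
    have h2 := abs_nonneg (Tt⁻¹ - 1)
    linarith
  · have := neg_le_abs (Tt⁻¹ - 1)
    have h2 := abs_nonneg (S - 1)
    linarith

lemma gelfand_real {A : Type*} [CStarAlgebra A] (a : A) (h : spectralRadius ℂ a = 1) :
    Tendsto (fun n : ℕ => ‖a ^ n‖ ^ (1 / n : ℝ)) atTop (𝓝 1) := by
  have h1 := spectrum.pow_nnnorm_pow_one_div_tendsto_nhds_spectralRadius a
  rw [h] at h1
  have h2 := (ENNReal.tendsto_toReal (by norm_num : (1 : ℝ≥0∞) ≠ ⊤)).comp h1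
  convert h2 using 1
  funext n
  simp [Function.comp, ← ENNReal.toReal_rpow]
  simp

/-- If `Q` is a quasinilpotent element of a unital C*-algebra `A`, then
`‖ |(1+Q)^n|^{1/n} - 1 ‖ → 0` as `n → ∞`; in particular `1 + Q` has the norm convergence
property (the sequence `|(1+Q)^n|^{1/n}` converges in norm). -/
theorem one_add_quasinilpotent_norm_convergence
    {A : Type*} [CStarAlgebra A] [PartialOrder A] [StarOrderedRing A]
    (Q : A) (hQ : spectrum ℂ Q = {0}) :
    Tendsto (fun n : ℕ => ‖absPowRoot (1 + Q) n - 1‖) atTop (𝓝 0) ∧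
    ∃ L : A, Tendsto (fun n : ℕ => absPowRoot (1 + Q) n) atTop (𝓝 L) := by
  have hσT : spectrum ℂ (1 + Q) = {1} := by
    have h := spectrum.singleton_add_eq (R := ℂ) Q 1
    rw [hQ, Set.singleton_add_singleton, map_one] at h
    simpa using h.symm
  obtain ⟨u, hu⟩ : IsUnit (1 + Q) := by
    rw [← spectrum.zero_notMem_iff ℂ, hσT]
    simp
  have hσu : spectrum ℂ ((↑u⁻¹ : A)) = {1} := by
    have := spectrum.map_inv (𝕜 := ℂ) u
    rw [hu, hσT] at this
    rw [← this, Set.inv_singleton, inv_one]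
  have hradT : spectralRadius ℂ (1 + Q) = 1 := by simp [spectralRadius, hσT]
  have hradu : spectralRadius ℂ ((↑u⁻¹ : A)) = 1 := by simp [spectralRadius, hσu]
  have hs := gelfand_real (1 + Q) hradT
  have ht := gelfand_real ((↑u⁻¹ : A)) hradu
  have hc : Tendsto (fun n : ℕ => |‖(1 + Q) ^ n‖ ^ (1 / n : ℝ) - 1| +
      |(‖((↑u⁻¹ : A)) ^ n‖ ^ (1 / n : ℝ))⁻¹ - 1|) atTop (𝓝 0) := by
    have h1 : Tendsto (fun n : ℕ => |‖(1 + Q) ^ n‖ ^ (1 / n : ℝ) - 1|) atTop (𝓝 |1 - 1|) :=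
      (hs.sub tendsto_const_nhds).abs
    have h2 : Tendsto (fun n : ℕ => |(‖((↑u⁻¹ : A)) ^ n‖ ^ (1 / n : ℝ))⁻¹ - 1|) atTop
        (𝓝 |(1 : ℝ)⁻¹ - 1|) := ((ht.inv₀ one_ne_zero).sub tendsto_const_nhds).abs
    have := h1.add h2
    norm_num at this
    simpa [one_div] using this
  have hmain : Tendsto (fun n : ℕ => ‖absPowRoot (1 + Q) n - 1‖) atTop (𝓝 0) := by
    apply squeeze_zero' (Eventually.of_forall fun n => norm_nonneg _) _ hc
    filter_upwards [eventually_ge_atTop 1] with n hn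
    have := key_bound u hn
    rw [hu] at this
    exact this
  refine ⟨hmain, 1, ?_⟩
  rw [tendsto_iff_norm_sub_tendsto_zero]
  exact hmain
end

section
/- Let A be a unital C*-algebra over ℂ and let Q ∈ A be quasinilpotent. Then for every λ ∈ ℂ, the sequence |(λ·1 + Q)^n|^{1/n} converges in norm to |λ|·1, i.e. ‖ |(λ·1+Q)^n|^{1/n} − |λ|·1 ‖ → 0 as n → ∞. In particular, Q has the shifted norm convergence property. -/
open Filter Topology

section Aux

variable {A : Type*} [CStarAlgebra A] [PartialOrder A] [StarOrderedRing A] [Nontrivial A]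

/-- Gelfand's formula, real-valued form. -/
lemma aux_gelfand (a : A) :
    Tendsto (fun n : ℕ => ‖a ^ n‖ ^ (1 / (n : ℝ))) atTop (𝓝 (spectralRadius ℂ a).toReal) := by
  have hfin : spectralRadius ℂ a ≠ ⊤ :=
    ((spectrum.spectralRadius_le_nnnorm (𝕜 := ℂ) a).trans_lt ENNReal.coe_lt_top).ne
  have h := (ENNReal.tendsto_toReal hfin).comp
    (spectrum.pow_norm_pow_one_div_tendsto_nhds_spectralRadius a)
  refine h.congr fun n => ?_
  simp [Function.comp, ENNReal.toReal_ofReal (Real.rpow_nonneg (norm_nonneg _) _)]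

lemma aux_radius {a : A} {μ : ℂ} (h : spectrum ℂ a = {μ}) :
    (spectralRadius ℂ a).toReal = ‖μ‖ := by
  rw [spectralRadius, h]
  simp

lemma aux_rpow_sq {m : ℝ} (hm : 0 ≤ m) {n : ℕ} (hn : 1 ≤ n) :
    (m * m) ^ ((2 * n : ℝ))⁻¹ = m ^ (1 / (n : ℝ)) := by
  have hn0 : (n : ℝ) ≠ 0 := Nat.cast_ne_zero.mpr (by omega)
  have h2 : (2 : ℝ) * ((2 * n : ℝ))⁻¹ = 1 / (n : ℝ) := by
    field_simp
  calc (m * m) ^ ((2 * n : ℝ))⁻¹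
      = (m ^ (2 : ℝ)) ^ ((2 * n : ℝ))⁻¹ := by rw [Real.rpow_two, sq]
    _ = m ^ ((2 : ℝ) * ((2 * n : ℝ))⁻¹) := (Real.rpow_mul hm _ _).symm
    _ = m ^ (1 / (n : ℝ)) := by rw [h2]

/-- Key norm estimate for `P^{1/(2n)} - c•1` from spectral bounds on `P`. -/
lemma aux_norm_le (P : A) (hP : 0 ≤ P) {n : ℕ} (hn : 1 ≤ n)
    {c lo b : ℝ} (hlo : 0 ≤ lo) (hb : 0 ≤ b)
    (hlow : ∀ x ∈ spectrum ℝ P, lo ≤ x)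
    (hub : ‖P‖ ^ ((2 * n : ℝ))⁻¹ - c ≤ b)
    (hlb : c - lo ^ ((2 * n : ℝ))⁻¹ ≤ b) :
    ‖CFC.rpow P ((2 * n : ℝ))⁻¹ - c • (1 : A)‖ ≤ b := by
  have hn0 : (0 : ℝ) < n := by exact_mod_cast hn
  set r : ℝ := ((2 * n : ℝ))⁻¹ with hr_def
  have hr : 0 < r := by positivity
  have hsa : IsSelfAdjoint P := .of_nonneg hP
  have hspec : ∀ x ∈ spectrum ℝ P, 0 ≤ x := fun x hx => spectrum_nonneg_of_nonneg hP hx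
  have hcont : ContinuousOn (fun x : ℝ => x ^ r) (spectrum ℝ P) := fun x _ =>
    (Real.continuousAt_rpow_const x r (Or.inr hr.le)).continuousWithinAt
  have h1 : CFC.rpow P r = cfc (fun x : ℝ => x ^ r) P := by
    have hd : CFC.rpow P r = cfc (fun x : NNReal => x ^ r) P := rfl
    rw [hd, cfc_nnreal_eq_real (ha := hP)]
    exact cfc_congr fun x hx => by
      rw [NNReal.coe_rpow, Real.coe_toNNReal x (hspec x hx)]
  have hconst : c • (1 : A) = cfc (fun _ : ℝ => c) P := by
    rw [cfc_const c P hsa, Algebra.algebraMap_eq_smul_one]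
  rw [h1, hconst, ← cfc_sub (fun x : ℝ => x ^ r) (fun _ => c) P hcont continuousOn_const]
  refine norm_cfc_le hb fun x hx => ?_
  have hx0 := hspec x hx
  have hxP : x ≤ ‖P‖ :=
    (le_abs_self x).trans (by simpa [Real.norm_eq_abs] using spectrum.norm_le_norm_of_mem hx)
  rw [Real.norm_eq_abs, abs_sub_le_iff]
  constructor
  · have := Real.rpow_le_rpow hx0 hxP hr.le
    linarith
  · have := Real.rpow_le_rpow hlo (hlow x hx) hr.le
    linarith

end Aux

/-- If `Q` is a quasinilpotent element of a unital C*-algebra `A`, then for every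
`λ ∈ ℂ` the sequence `|(λ·1 + Q)^n|^{1/n}` converges in norm to `|λ|·1`; in particular, `Q` has
the shifted norm convergence property (`|(Q - λ·1)^n|^{1/n}` converges in norm for every `λ`). -/
theorem quasinilpotent_shifted_norm_convergence
    {A : Type*} [CStarAlgebra A] [PartialOrder A] [StarOrderedRing A]
    (Q : A) (hQ : spectrum ℂ Q = {0}) :
    (∀ lam : ℂ, Tendsto (fun n : ℕ => ‖absPowRoot (lam • (1 : A) + Q) n - ‖lam‖ • (1 : A)‖)
      atTop (𝓝 0)) ∧
    (∀ lam : ℂ, ∃ L : A, Tendsto (fun n : ℕ => absPowRoot (Q - lam • (1 : A)) n)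
      atTop (𝓝 L)) := by
  rcases subsingleton_or_nontrivial A with hsub | hnt
  · constructor
    · intro lam
      have hz : ∀ n : ℕ, ‖absPowRoot (lam • (1 : A) + Q) n - ‖lam‖ • (1 : A)‖ = 0 := fun n => by
        rw [Subsingleton.elim (absPowRoot (lam • (1 : A) + Q) n - ‖lam‖ • (1 : A)) 0, norm_zero]
      simp only [hz]
      exact tendsto_const_nhds
    · intro lam
      refine ⟨0, ?_⟩
      have hz : ∀ n : ℕ, absPowRoot (Q - lam • (1 : A)) n = 0 := fun n => Subsingleton.elim _ _
      simp only [hz]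
      exact tendsto_const_nhds
  have main : ∀ lam : ℂ, Tendsto
      (fun n : ℕ => ‖absPowRoot (lam • (1 : A) + Q) n - ‖lam‖ • (1 : A)‖) atTop (𝓝 0) := by
    intro lam
    have hT : spectrum ℂ (lam • (1 : A) + Q) = {lam} := by
      rw [← Algebra.algebraMap_eq_smul_one, ← spectrum.singleton_add_eq, hQ]
      simp
    have hub : Tendsto (fun n : ℕ => ‖(lam • (1 : A) + Q) ^ n‖ ^ (1 / (n : ℝ))) atTop
        (𝓝 ‖lam‖) := by
      have h := aux_gelfand (lam • (1 : A) + Q)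
      rwa [aux_radius hT] at h
    by_cases hlam : lam = 0
    · subst hlam
      simp only [show (0 : ℂ) • (1 : A) + Q = Q by simp, norm_zero, zero_smul, sub_zero] at hub ⊢
      refine squeeze_zero' (Eventually.of_forall fun n => norm_nonneg _) ?_ hub
      filter_upwards [eventually_ge_atTop 1] with n hn
      have hr : ((2 * n : ℝ))⁻¹ ≠ 0 := by
        have : (0 : ℝ) < n := by exact_mod_cast hn
        positivity
      have key := aux_norm_le (star (Q ^ n) * Q ^ n) (star_mul_self_nonneg _) hn
        (c := 0) (lo := 0) (b := ‖Q ^ n‖ ^ (1 / (n : ℝ))) le_rfl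
        (Real.rpow_nonneg (norm_nonneg _) _)
        (fun x hx => spectrum_nonneg_of_nonneg (star_mul_self_nonneg _) hx) ?_ ?_
      · simpa [absPowRoot] using key
      · rw [CStarRing.norm_star_mul_self, aux_rpow_sq (norm_nonneg _) hn, sub_zero]
      · rw [Real.zero_rpow hr, sub_zero]
        exact Real.rpow_nonneg (norm_nonneg _) _
    · obtain ⟨u, hu⟩ := spectrum.isUnit_of_zero_notMem (R := ℂ)
        (a := lam • (1 : A) + Q) (by simp [hT, eq_comm, hlam])
      have hσinv : spectrum ℂ (↑u⁻¹ : A) = {lam⁻¹} := by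
        ext z
        simp only [Set.mem_singleton_iff]
        constructor
        · intro hz
          have hz0 : z ≠ 0 := fun h => (h ▸ Units.zero_notMem_spectrum (R := ℂ) u⁻¹) hz
          have h1 := (spectrum.inv_mem_iff (r := Units.mk0 z hz0) (a := u⁻¹)).mp
            (by simpa using hz)
          rw [inv_inv] at h1
          have h2 : z⁻¹ ∈ spectrum ℂ ((↑u : A)) := by simpa using h1
          rw [hu, hT, Set.mem_singleton_iff] at h2
          rw [← h2, inv_inv]
        · rintro rfl
          have h1 : ((Units.mk0 lam hlam : ℂˣ) : ℂ) ∈ spectrum ℂ ((↑u : A)) := by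
            rw [hu, hT]; simp
          simpa using spectrum.inv_mem_iff.mp h1
      have hlb0 : Tendsto (fun n : ℕ => ‖(↑u⁻¹ : A) ^ n‖ ^ (1 / (n : ℝ))) atTop
          (𝓝 ‖lam‖⁻¹) := by
        have h := aux_gelfand (↑u⁻¹ : A)
        rwa [aux_radius hσinv, norm_inv] at h
      have hlb : Tendsto (fun n : ℕ => (‖(↑u⁻¹ : A) ^ n‖ ^ (1 / (n : ℝ)))⁻¹) atTop
          (𝓝 ‖lam‖) := by
        have h := hlb0.inv₀ (inv_ne_zero (norm_ne_zero_iff.mpr hlam))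
        rwa [inv_inv] at h
      have hbt : Tendsto (fun n : ℕ =>
          |‖(lam • (1 : A) + Q) ^ n‖ ^ (1 / (n : ℝ)) - ‖lam‖| +
            |(‖(↑u⁻¹ : A) ^ n‖ ^ (1 / (n : ℝ)))⁻¹ - ‖lam‖|) atTop (𝓝 0) := by
        have h1 := (hub.sub_const ‖lam‖).abs
        have h2 := (hlb.sub_const ‖lam‖).abs
        simpa only [sub_self, abs_zero, add_zero] using h1.add h2
      refine squeeze_zero' (Eventually.of_forall fun n => norm_nonneg _) ?_ hbt
      filter_upwards [eventually_ge_atTop 1] with n hn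
      set W : A := (↑u⁻¹ : A) ^ n with hW
      have hWu : W = ((u⁻¹ ^ n : Aˣ) : A) := by rw [hW, Units.val_pow_eq_pow_val]
      have hWpos : 0 < ‖W‖ := by
        rw [norm_pos_iff, hWu]
        exact Units.ne_zero _
      have hMpos : 0 < ‖W‖ * ‖W‖ := mul_pos hWpos hWpos
      have hlow : ∀ x ∈ spectrum ℝ (star ((lam • (1 : A) + Q) ^ n) * (lam • (1 : A) + Q) ^ n),
          (‖W‖ * ‖W‖)⁻¹ ≤ x := by
        intro x hx
        have hx0 : 0 ≤ x := spectrum_nonneg_of_nonneg (star_mul_self_nonneg _) hx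
        set v : Aˣ := star (u ^ n) * u ^ n with hv
        have hvP : (↑v : A) = star ((lam • (1 : A) + Q) ^ n) * (lam • (1 : A) + Q) ^ n := by
          rw [hv, Units.val_mul, Units.coe_star, Units.val_pow_eq_pow_val, hu]
        have hxne : x ≠ 0 := fun h =>
          (h ▸ (hvP ▸ Units.zero_notMem_spectrum (R := ℝ) v)) hx
        have hxinv : x⁻¹ ∈ spectrum ℝ (↑v⁻¹ : A) := by
          have h1 := (spectrum.inv_mem_iff (r := Units.mk0 x hxne) (a := v)).mp
            (by rw [hvP]; simpa using hx)
          simpa using h1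
        have hv_inv : (↑v⁻¹ : A) = W * star W := by
          rw [hv, mul_inv_rev, Units.val_mul, Units.coe_star_inv, hWu, inv_pow]
        have hxinvle : x⁻¹ ≤ ‖W‖ * ‖W‖ := by
          have h := spectrum.norm_le_norm_of_mem hxinv
          rw [hv_inv, CStarRing.norm_self_mul_star, Real.norm_eq_abs] at h
          exact (le_abs_self _).trans h
        calc (‖W‖ * ‖W‖)⁻¹ ≤ (x⁻¹)⁻¹ :=
              inv_anti₀ (inv_pos.mpr (hx0.lt_of_ne (Ne.symm hxne))) hxinvle
          _ = x := inv_inv x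
      simp only [absPowRoot]
      refine aux_norm_le _ (star_mul_self_nonneg _) hn (by positivity) (by positivity)
        hlow ?_ ?_
      · rw [CStarRing.norm_star_mul_self, aux_rpow_sq (norm_nonneg _) hn]
        exact (le_abs_self _).trans (le_add_of_nonneg_right (abs_nonneg _))
      · rw [Real.inv_rpow hMpos.le, aux_rpow_sq (norm_nonneg W) hn]
        have h1 : ‖lam‖ - (‖W‖ ^ (1 / (n : ℝ)))⁻¹ ≤
            |(‖W‖ ^ (1 / (n : ℝ)))⁻¹ - ‖lam‖| := by
          rw [abs_sub_comm]; exact le_abs_self _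
        exact h1.trans (le_add_of_nonneg_left (abs_nonneg _))
  refine ⟨main, fun lam => ⟨‖lam‖ • (1 : A), ?_⟩⟩
  rw [tendsto_iff_norm_sub_tendsto_zero]
  have h := main (-lam)
  have heq : (-lam) • (1 : A) + Q = Q - lam • (1 : A) := by
    rw [neg_smul, neg_add_eq_sub]
  rw [heq] at h
  simpa only [norm_neg] using h
end

section
/- Let A be a unital C*-algebra over ℂ, let T ∈ A, and write B = (T − T*)/(2i) for the imaginary part of T. Let λ ∈ ℂ with Im λ ≠ 0. If ‖B‖ ≤ |Im λ|/2, then λ·1 − T is invertible in A and ‖(λ·1 − T)^{-1}‖ ≤ 2/|Im λ|. -/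
open Filter Topology

lemma selfadjoint_resolvent_aux {A : Type*} [CStarAlgebra A] {H : A} (hH : IsSelfAdjoint H)
    (lam : ℂ) (him : lam.im ≠ 0) :
    ∃ R : A, (algebraMap ℂ A lam - H) * R = 1 ∧ R * (algebraMap ℂ A lam - H) = 1 ∧
      ‖R‖ ≤ 1 / |lam.im| := by
  have hne : ∀ z ∈ spectrum ℂ H, lam - z ≠ 0 := by
    intro z hz h0
    have hzim : z.im = 0 := hH.im_eq_zero_of_mem_spectrum hz
    apply him
    have : (lam - z).im = 0 := by rw [h0]; simp
    simpa [Complex.sub_im, hzim] using this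
  have hcg : ContinuousOn (fun z : ℂ => lam - z) (spectrum ℂ H) := by fun_prop
  have hcf : ContinuousOn (fun z : ℂ => (lam - z)⁻¹) (spectrum ℂ H) :=
    ContinuousOn.inv₀ hcg hne
  have hrepr : algebraMap ℂ A lam - H = cfc (fun z : ℂ => lam - z) H := by
    rw [cfc_sub (fun _ => lam) (fun z => z) H (by fun_prop) (by fun_prop), cfc_const lam H,
      cfc_id' ℂ H]
  refine ⟨cfc (fun z : ℂ => (lam - z)⁻¹) H, ?_, ?_, ?_⟩
  · rw [hrepr, ← cfc_mul _ _ H hcg hcf,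
      cfc_congr (g := fun _ => (1 : ℂ)) (fun z hz => mul_inv_cancel₀ (hne z hz)),
      cfc_const 1 H, map_one]
  · rw [hrepr, ← cfc_mul _ _ H hcf hcg,
      cfc_congr (g := fun _ => (1 : ℂ)) (fun z hz => inv_mul_cancel₀ (hne z hz)),
      cfc_const 1 H, map_one]
  · refine norm_cfc_le (by positivity) fun z hz => ?_
    have hzim : z.im = 0 := hH.im_eq_zero_of_mem_spectrum hz
    have h1 : |lam.im| ≤ ‖lam - z‖ := by
      calc |lam.im| = |(lam - z).im| := by simp [Complex.sub_im, hzim]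
        _ ≤ ‖lam - z‖ := Complex.abs_im_le_norm _
        _ = ‖lam - z‖ := rfl
    rw [norm_inv, one_div]
    exact inv_anti₀ (abs_pos.mpr him) h1

/-- Let `T` be an element of a unital C*-algebra `A`, and let
`B = (2i)⁻¹ • (T - T*)` be its imaginary part. If `λ ∈ ℂ` with `Im λ ≠ 0` and
`‖B‖ ≤ |Im λ| / 2`, then `λ·1 - T` is invertible with `‖(λ·1 - T)⁻¹‖ ≤ 2 / |Im λ|`. -/
theorem isUnit_smul_one_sub_of_norm_imaginary_part_le
    {A : Type*} [CStarAlgebra A] (T : A) (lam : ℂ) (him : lam.im ≠ 0)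
    (hB : ‖((2 * Complex.I)⁻¹ : ℂ) • (T - star T)‖ ≤ |lam.im| / 2) :
    IsUnit (algebraMap ℂ A lam - T) ∧
    ∃ S : A, (algebraMap ℂ A lam - T) * S = 1 ∧ S * (algebraMap ℂ A lam - T) = 1 ∧
      ‖S‖ ≤ 2 / |lam.im| := by
  rcases subsingleton_or_nontrivial A with hsub | hnt
  · refine ⟨isUnit_of_subsingleton _, 1, Subsingleton.elim _ _, Subsingleton.elim _ _, ?_⟩
    rw [Subsingleton.elim (1 : A) 0, norm_zero]
    positivity
  set B : A := ((2 * Complex.I)⁻¹ : ℂ) • (T - star T) with hBdef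
  set H : A := ((2 : ℂ)⁻¹ : ℂ) • (T + star T) with hHdef
  have hH : IsSelfAdjoint H := by
    have h1 : IsSelfAdjoint (T + star T) := by
      simp [IsSelfAdjoint, add_comm]
    have h2 : star ((2 : ℂ)⁻¹) = (2 : ℂ)⁻¹ := by
      simp [Complex.star_def, map_inv₀]
    exact IsSelfAdjoint.smul h2 h1
  obtain ⟨R, hR1, hR2, hRnorm⟩ := selfadjoint_resolvent_aux hH lam him
  -- decomposition : T = H + I • B
  have hdecomp : T = H + Complex.I • B := by
    rw [hHdef, hBdef, smul_smul]
    rw [show Complex.I * (2 * Complex.I)⁻¹ = (2 : ℂ)⁻¹ by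
      field_simp]
    rw [smul_add, smul_sub]
    module
  have key : algebraMap ℂ A lam - T = (algebraMap ℂ A lam - H) - Complex.I • B := by
    rw [hdecomp]; abel
  have himpos : (0 : ℝ) < |lam.im| := abs_pos.mpr him
  set t : A := R * (Complex.I • B) with htdef
  have htnorm : ‖t‖ ≤ 1 / 2 := by
    calc ‖t‖ ≤ ‖R‖ * ‖Complex.I • B‖ := norm_mul_le _ _
      _ ≤ (1 / |lam.im|) * (|lam.im| / 2) := by
          refine mul_le_mul hRnorm ?_ (norm_nonneg _) (by positivity)
          rw [norm_smul, Complex.norm_I, one_mul]; exact hB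
      _ = 1 / 2 := by field_simp
  have ht : ‖t‖ < 1 := lt_of_le_of_lt htnorm (by norm_num)
  set W : A := ∑' n : ℕ, t ^ n with hWdef
  have hW1 : (1 - t) * W = 1 := mul_neg_geom_series t ht
  have hW2 : W * (1 - t) = 1 := geom_series_mul_neg t ht
  have hWnorm : ‖W‖ ≤ 2 := by
    have := tsum_geometric_le_of_norm_lt_one t ht
    have h2 : (1 - ‖t‖)⁻¹ ≤ 2 := by
      rw [← one_div]
      rw [div_le_iff₀ (by linarith)]
      linarith
    calc ‖W‖ ≤ ‖(1 : A)‖ - 1 + (1 - ‖t‖)⁻¹ := this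
      _ = (1 - ‖t‖)⁻¹ := by rw [norm_one]; ring
      _ ≤ 2 := h2
  -- (λ - T) = (λ - H) * (1 - t)
  have hfact : algebraMap ℂ A lam - T = (algebraMap ℂ A lam - H) * (1 - t) := by
    rw [key, htdef, mul_sub, mul_one, ← mul_assoc, hR1, one_mul]
  have hS1 : (algebraMap ℂ A lam - T) * (W * R) = 1 := by
    rw [hfact, mul_assoc, ← mul_assoc (1 - t) W R, hW1, one_mul, hR1]
  have hS2 : (W * R) * (algebraMap ℂ A lam - T) = 1 := by
    rw [hfact, ← mul_assoc, mul_assoc W R, hR2, mul_one, hW2]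
  refine ⟨⟨⟨_, W * R, hS1, hS2⟩, rfl⟩, W * R, hS1, hS2, ?_⟩
  calc ‖W * R‖ ≤ ‖W‖ * ‖R‖ := norm_mul_le _ _
    _ ≤ 2 * (1 / |lam.im|) :=
        mul_le_mul hWnorm hRnorm (norm_nonneg _) (by norm_num)
    _ = 2 / |lam.im| := by ring
end

section
/- Let (H_n)_{n≥1} be a sequence of complex Hilbert spaces, let H be their ℓ²-Hilbert space direct sum, and for each n let Q_n ∈ B(H_n) be a nilpotent operator (Q_n^{m_n} = 0 for some m_n ∈ ℕ) with sup_n ‖Q_n‖ < ∞. Let Q ∈ B(H) be the bounded block-diagonal operator determined by (Q x)_n = Q_n x_n for all x ∈ H and all n. Then Q is s.o.t.-quasinilpotent, i.e. ‖ |Q^m|^{1/m} x ‖ → 0 as m → ∞ for every x ∈ H. -/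
open Filter Topology

/-- An operator `Q ∈ B(H)` is s.o.t.-quasinilpotent if `|Q^m|^{1/m} → 0` in the strong
operator topology. -/
def SOTQuasinilpotent {H : Type*} [NormedAddCommGroup H] [InnerProductSpace ℂ H]
    [CompleteSpace H] (Q : H →L[ℂ] H) : Prop :=
  ∀ x : H, Tendsto (fun m : ℕ => ‖absPowRoot Q m x‖) atTop (𝓝 0)

open scoped NNReal ENNReal

section Aux

variable {H : Type*} [NormedAddCommGroup H] [InnerProductSpace ℂ H] [CompleteSpace H]

lemma aux_selfAdjoint_sq_ker {A : H →L[ℂ] H} (hA : IsSelfAdjoint A) {x : H}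
    (h : A (A x) = 0) : A x = 0 := by
  have h1 : inner ℂ (A x) (A x) = (0 : ℂ) := by
    nth_rewrite 1 [← hA.adjoint_eq]
    rw [ContinuousLinearMap.adjoint_inner_left, h, inner_zero_right]
  exact inner_self_eq_zero.mp h1

lemma aux_selfAdjoint_pow2_ker {A : H →L[ℂ] H} (hA : IsSelfAdjoint A) {x : H} :
    ∀ k : ℕ, (A ^ (2 ^ k)) x = 0 → A x = 0 := by
  intro k
  induction k with
  | zero => simpa using id
  | succ k ih =>
    intro h
    apply ih
    have hexp : (2 : ℕ) ^ (k + 1) = 2 ^ k + 2 ^ k := by ring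
    rw [hexp, pow_add, ContinuousLinearMap.mul_apply] at h
    exact aux_selfAdjoint_sq_ker (hA.pow _) h

lemma aux_selfAdjoint_pow_ker {A : H →L[ℂ] H} (hA : IsSelfAdjoint A) {x : H} {n : ℕ}
    (hn : 1 ≤ n) (h : (A ^ n) x = 0) : A x = 0 := by
  apply aux_selfAdjoint_pow2_ker hA n
  have h2 : n ≤ 2 ^ n := Nat.le_of_lt (Nat.lt_two_pow_self)
  have : (A : H →L[ℂ] H) ^ (2 ^ n) = A ^ (2 ^ n - n) * A ^ n := by
    rw [← pow_add]
    congr 1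
    omega
  rw [this, ContinuousLinearMap.mul_apply, h, map_zero]

end Aux

set_option maxHeartbeats 1000000 in
/-- Let `(G n)` be a sequence of complex Hilbert spaces, let `lp G 2` be their
ℓ²-Hilbert space direct sum, and for each `n` let `Qn n ∈ B(G n)` be nilpotent, with
`sup_n ‖Qn n‖ < ∞`. If `Q` is the bounded block-diagonal operator on `lp G 2` determined
by `(Q x) n = Qn n (x n)`, then `Q` is s.o.t.-quasinilpotent. -/
theorem blockDiagonal_nilpotent_sotQuasinilpotent
    (G : ℕ → Type*) [∀ n, NormedAddCommGroup (G n)] [∀ n, InnerProductSpace ℂ (G n)]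
    [∀ n, CompleteSpace (G n)]
    (Qn : ∀ n, G n →L[ℂ] G n) (hnil : ∀ n, IsNilpotent (Qn n))
    (C : ℝ) (hC : ∀ n, ‖Qn n‖ ≤ C)
    (Q : lp G 2 →L[ℂ] lp G 2)
    (hQ : ∀ (x : lp G 2) (n : ℕ), (Q x) n = Qn n (x n)) :
    SOTQuasinilpotent Q := by
  intro x
  rcases subsingleton_or_nontrivial (lp G 2) with hsub | hnt
  · have hz : ∀ m : ℕ, ‖absPowRoot Q m x‖ = 0 := fun m => by
      rw [Subsingleton.elim ((absPowRoot Q m) x) 0, norm_zero]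
    simp only [hz]
    exact tendsto_const_nhds
  set D : ℝ≥0 := ‖Q‖₊ + 1 with hDdef
  have hD1 : (1 : ℝ≥0) ≤ D := le_add_self
  have hDpos : (0 : ℝ) < (D : ℝ) := by
    have := hD1
    exact_mod_cast lt_of_lt_of_le one_pos this
  rw [Metric.tendsto_atTop]
  intro ε hε
  -- truncate x
  have hsum := (lp.hasSum_single (by norm_num : (2 : ℝ≥0∞) ≠ ⊤) x).tendsto_sum_nat
  obtain ⟨N, hN⟩ := (Metric.tendsto_atTop.mp hsum) (ε / D) (by positivity)
  set y : lp G 2 := ∑ i ∈ Finset.range N, lp.single 2 i (x i) with hy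
  have hxy : ‖x - y‖ < ε / D := by
    have := hN N le_rfl
    rwa [dist_eq_norm, ← norm_neg, neg_sub] at this
  have hyc : ∀ n : ℕ, y n = if n < N then x n else 0 := by
    intro n
    rw [hy]
    rw [lp.coeFn_sum]
    simp [Finset.sum_apply, lp.single_apply, Finset.sum_dite_eq']
  -- nilpotency indices
  choose k hk using hnil
  refine ⟨max 1 ((Finset.range N).sup k), fun m hm => ?_⟩
  have hm1 : 1 ≤ m := le_trans (le_max_left _ _) hm
  -- coordinates of powers of Q
  have hpow : ∀ (j : ℕ) (z : lp G 2) (n : ℕ), ((Q ^ j) z) n = ((Qn n) ^ j) (z n) := by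
    intro j
    induction j with
    | zero => intro z n; simp
    | succ j ih =>
      intro z n
      rw [pow_succ, pow_succ, ContinuousLinearMap.mul_apply, ih, hQ,
        ContinuousLinearMap.mul_apply]
  -- Q^m kills y
  have hQy : (Q ^ m) y = 0 := by
    apply lp.ext
    funext n
    rw [lp.coeFn_zero, Pi.zero_apply, hpow]
    rcases lt_or_ge n N with h | h
    · have hkn : k n ≤ m :=
        le_trans (Finset.le_sup (Finset.mem_range.mpr h)) (le_trans (le_max_right _ _) hm)
      rw [pow_eq_zero_of_le hkn (hk n), ContinuousLinearMap.zero_apply]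
    · rw [hyc n, if_neg (not_lt.mpr h), map_zero]
  set P : lp G 2 →L[ℂ] lp G 2 := star (Q ^ m) * Q ^ m with hPdef
  have hP : (0 : lp G 2 →L[ℂ] lp G 2) ≤ P := star_mul_self_nonneg _
  have hPy : P y = 0 := by
    rw [hPdef, ContinuousLinearMap.mul_apply, hQy, map_zero]
  set A : lp G 2 →L[ℂ] lp G 2 := absPowRoot Q m with hAdef
  have hAnn : (0 : lp G 2 →L[ℂ] lp G 2) ≤ A := by
    rw [hAdef, absPowRoot, CFC.rpow_eq_pow]
    exact CFC.rpow_nonneg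
  have hAsa : IsSelfAdjoint A := IsSelfAdjoint.of_nonneg hAnn
  have hcast : ((2 * m : ℝ))⁻¹ * ((2 * m : ℕ) : ℝ) = 1 := by
    have : ((2 * m : ℕ) : ℝ) = (2 * m : ℝ) := by push_cast; ring
    rw [this]
    apply inv_mul_cancel₀
    positivity
  have hA2m : A ^ (2 * m) = P := by
    letI : ContinuousFunctionalCalculus ℝ (lp G 2 →L[ℂ] lp G 2) IsSelfAdjoint :=
      IsSelfAdjoint.instContinuousFunctionalCalculus
    rw [hAdef, absPowRoot, CFC.rpow_eq_pow, ← hPdef]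
    erw [← CFC.rpow_natCast (P ^ ((2 * m : ℝ))⁻¹ : lp G 2 →L[ℂ] lp G 2) (2 * m) CFC.rpow_nonneg]
    erw [CFC.rpow_rpow_of_exponent_nonneg P ((2 * m : ℝ))⁻¹ ((2 * m : ℕ) : ℝ)
      (by positivity) (by positivity) hP]
    erw [hcast, CFC.rpow_one P hP]
  have hAy : A y = 0 := by
    apply aux_selfAdjoint_pow_ker hAsa (n := 2 * m) (by omega)
    rw [hA2m, hPy]
  -- norm bound on A
  have hQD : ‖Q‖₊ ≤ D := le_add_right le_rfl
  have hPnorm : ‖P‖₊ ≤ D ^ (2 * m) := by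
    calc ‖P‖₊ = ‖Q ^ m‖₊ * ‖Q ^ m‖₊ := CStarRing.nnnorm_star_mul_self
    _ ≤ ‖Q‖₊ ^ m * ‖Q‖₊ ^ m :=
        mul_le_mul' (nnnorm_pow_le' Q (by omega)) (nnnorm_pow_le' Q (by omega))
    _ = ‖Q‖₊ ^ (2 * m) := by rw [two_mul, pow_add]
    _ ≤ D ^ (2 * m) := pow_le_pow_left' hQD _
  have hAnorm : ‖A‖₊ ≤ D := by
    letI : ContinuousFunctionalCalculus ℝ (lp G 2 →L[ℂ] lp G 2) IsSelfAdjoint :=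
      IsSelfAdjoint.instContinuousFunctionalCalculus
    have heq : A = cfc (fun z : ℝ≥0 => z ^ ((2 * m : ℝ))⁻¹) P := by
      rw [hAdef, absPowRoot, hPdef]
      rfl
    rw [heq]
    apply nnnorm_cfc_nnreal_le
    intro z hz
    have hz' : z ≤ D ^ (2 * m) := (spectrum.le_nnnorm_of_mem hz).trans hPnorm
    calc z ^ ((2 * m : ℝ))⁻¹ ≤ (D ^ (2 * m)) ^ ((2 * m : ℝ))⁻¹ :=
        NNReal.rpow_le_rpow hz' (by positivity)
    _ = D := by
        have hcast' : ((2 * m : ℕ) : ℝ) * ((2 * m : ℝ))⁻¹ = 1 := by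
          rw [mul_comm]; exact hcast
        rw [← NNReal.rpow_natCast D (2 * m), ← NNReal.rpow_mul, hcast', NNReal.rpow_one]
  -- conclude
  have hAx : A x = A (x - y) := by rw [map_sub, hAy, sub_zero]
  have hnormA : ‖A‖ ≤ (D : ℝ) := hAnorm
  rw [Real.dist_0_eq_abs, abs_of_nonneg (norm_nonneg _)]
  show ‖A x‖ < ε
  calc ‖A x‖ = ‖A (x - y)‖ := by rw [hAx]
  _ ≤ ‖A‖ * ‖x - y‖ := A.le_opNorm _
  _ ≤ (D : ℝ) * ‖x - y‖ := mul_le_mul_of_nonneg_right hnormA (norm_nonneg _)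
  _ < (D : ℝ) * (ε / D) := mul_lt_mul_of_pos_left hxy hDpos
  _ = ε := mul_div_cancel₀ ε (ne_of_gt hDpos)
end
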